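/- Let r, R > 0 and let F_k, F_∞ be compact sets in S_{r,R} (star-shaped with respect to B_r(0) and contained in B_R(0)) for k ∈ ℕ ∪ {∞}. Define the pseudo-distance d̃(E,F) = (∫_{E△F} dist(x, ∂E) dx)^{1/2}. Then d̃(F_k, F_∞) → 0 as k → ∞ if and only if F_k → F_∞ in the Hausdorff metric. -/

import Mathlib

open Metric MeasureTheory Filter Set Pointwise

/-- `Ω` is star-shaped with respect to the ball `B_r(0)`. -/
def StarShapedWrtBall (n : ℕ) (r : ℝ) (Ω : Set (EuclideanSpace ℝ (Fin n))) : Prop :=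
  ∀ y ∈ ball (0 : EuclideanSpace ℝ (Fin n)) r, ∀ x ∈ Ω, segment ℝ y x ⊆ Ω

/-- The class `S_{r,R}` of compact sets `B_r(0) ⊆ Ω ⊆ B̄_R(0)` star-shaped with
respect to `B_r(0)`. -/
def MemSrR (n : ℕ) (r R : ℝ) (Ω : Set (EuclideanSpace ℝ (Fin n))) : Prop :=
  ball (0 : EuclideanSpace ℝ (Fin n)) r ⊆ Ω ∧
    Ω ⊆ closedBall (0 : EuclideanSpace ℝ (Fin n)) R ∧ StarShapedWrtBall n r Ω

/-- The pseudo-distance `d̃(E,F) = (∫_{E△F} dist(x,∂E) dx)^{1/2}`. -/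
noncomputable def dtil (n : ℕ) (E F : Set (EuclideanSpace ℝ (Fin n))) : ℝ :=
  Real.sqrt (∫ x in symmDiff E F, infDist x (frontier E))

section Aux

variable {n : ℕ} {r R : ℝ}

local notation "V" => EuclideanSpace ℝ (Fin n)

lemma le_infDist' {α : Type*} [PseudoMetricSpace α] {s : Set α} {x : α} {c : ℝ}
    (hs : s.Nonempty) (h : ∀ y ∈ s, c ≤ dist x y) : c ≤ infDist x s := by
  by_contra hc
  push_neg at hc
  rw [Metric.infDist_lt_iff hs] at hc
  obtain ⟨y, hy, hd⟩ := hc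
  exact absurd (h y hy) (not_le.mpr hd)

lemma MemSrR.zero_mem {E : Set V} (hE : MemSrR n r R E) (hr : 0 < r) : (0 : V) ∈ E :=
  hE.1 (mem_ball_self hr)

lemma MemSrR.cone_ball_subset {E : Set V} (hE : MemSrR n r R E) (hr : 0 < r) {x : V}
    (hx : x ∈ E) {t : ℝ} (ht : 0 < t) (ht1 : t ≤ 1) : ball ((1 - t) • x) (t * r) ⊆ E := by
  intro y hy
  rw [mem_ball, dist_eq_norm] at hy
  have hw : t⁻¹ • (y - (1 - t) • x) ∈ ball (0 : V) r := by
    rw [mem_ball_zero_iff, norm_smul, norm_inv, Real.norm_eq_abs, abs_of_pos ht]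
    calc t⁻¹ * ‖y - (1 - t) • x‖ < t⁻¹ * (t * r) :=
          mul_lt_mul_of_pos_left hy (inv_pos.mpr ht)
      _ = r := by field_simp
  refine hE.2.2 _ hw x hx ⟨t, 1 - t, ht.le, by linarith, by ring, ?_⟩
  rw [smul_smul, mul_inv_cancel₀ ht.ne', one_smul]
  abel

lemma MemSrR.subset_smul {E : Set V} (hE : MemSrR n r R E) (hr : 0 < r) {s : ℝ}
    (hs : 1 ≤ s) : E ⊆ s • E := by
  intro x hx
  have hs0 : s ≠ 0 := ne_of_gt (by linarith)
  rw [mem_smul_set_iff_inv_smul_mem₀ hs0]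
  have h1 : s⁻¹ ≤ 1 := by
    rw [inv_le_one_iff₀]
    right; exact hs
  have h2 : (0:ℝ) ≤ s⁻¹ := by positivity
  refine hE.2.2 0 (mem_ball_self hr) x hx ⟨1 - s⁻¹, s⁻¹, by linarith, h2, by ring, by simp⟩

lemma MemSrR.infDist_smul_ge {E : Set V} (hE : MemSrR n r R E) (hr : 0 < r) {q : V}
    (hq : q ∉ E) {μ : ℝ} (hμ : 1 ≤ μ) : (μ - 1) * r ≤ infDist (μ • q) E := by
  refine le_infDist' ⟨0, hE.zero_mem hr⟩ (fun z hz => ?_)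
  by_contra hlt
  push_neg at hlt
  have hd0 : (0:ℝ) ≤ dist (μ • q) z := dist_nonneg
  have hμ1 : 1 < μ := by nlinarith
  have hμ0 : μ ≠ 0 := ne_of_gt (by linarith)
  have hμ10 : μ - 1 ≠ 0 := ne_of_gt (by linarith)
  have hw : (μ - 1)⁻¹ • (μ • q - z) ∈ ball (0 : V) r := by
    rw [mem_ball_zero_iff, norm_smul, norm_inv, Real.norm_eq_abs,
      abs_of_pos (by linarith : (0:ℝ) < μ - 1)]
    rw [dist_eq_norm] at hlt
    calc (μ - 1)⁻¹ * ‖μ • q - z‖ < (μ - 1)⁻¹ * ((μ - 1) * r) :=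
          mul_lt_mul_of_pos_left hlt (inv_pos.mpr (by linarith))
      _ = r := by field_simp
  have hinv : μ⁻¹ ≤ 1 := by
    rw [inv_le_one_iff₀]; right; exact hμ
  have hinv0 : (0:ℝ) ≤ μ⁻¹ := by positivity
  refine hq (hE.2.2 _ hw z hz ⟨1 - μ⁻¹, μ⁻¹, by linarith, hinv0, by ring, ?_⟩)
  have h1 : (1 - μ⁻¹) * (μ - 1)⁻¹ = μ⁻¹ := by
    field_simp
  rw [smul_smul, h1, smul_sub, smul_smul, inv_mul_cancel₀ hμ0, one_smul]
  abel

lemma MemSrR.mem_smul_of_infDist_le {E : Set V} (hE : MemSrR n r R E) (hr : 0 < r)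
    {y : V} {δ s : ℝ} (hδ0 : 0 ≤ δ) (hδ : infDist y E ≤ δ) (hs : 1 + δ / r < s) :
    y ∈ s • E := by
  have hs1 : 1 < s := lt_of_le_of_lt (le_add_of_nonneg_right (div_nonneg hδ0 hr.le)) hs
  have hs0 : s ≠ 0 := ne_of_gt (by linarith)
  rw [mem_smul_set_iff_inv_smul_mem₀ hs0]
  by_contra hq
  have h2 := hE.infDist_smul_ge hr hq (μ := s) hs1.le
  rw [smul_inv_smul₀ hs0] at h2
  have h3 : (s - 1) * r ≤ δ := h2.trans hδ
  have h4 : δ / r < s - 1 := by linarith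
  rw [div_lt_iff₀ hr] at h4
  linarith

lemma exists_not_mem_of_subset_closedBall (hn : 0 < n) (hR : 0 < R) {E : Set V}
    (hRE : E ⊆ closedBall (0 : V) R) : ∃ x : V, x ∉ E := by
  refine ⟨EuclideanSpace.single ⟨0, hn⟩ (R + 1 : ℝ), fun hx => ?_⟩
  have h1 := hRE hx
  rw [mem_closedBall_zero_iff, EuclideanSpace.norm_single] at h1
  rw [Real.norm_eq_abs, abs_of_pos (by linarith)] at h1
  linarith

lemma MemSrR.frontier_nonempty (hn : 0 < n) (hr : 0 < r) (hR : 0 < R) {E : Set V}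
    (hE : MemSrR n r R E) : (frontier E).Nonempty := by
  rw [nonempty_frontier_iff]
  refine ⟨⟨0, hE.zero_mem hr⟩, fun h => ?_⟩
  obtain ⟨x, hx⟩ := exists_not_mem_of_subset_closedBall hn hR hE.2.1
  rw [h] at hx
  exact hx (mem_univ x)

lemma symmDiff_subset_closedBall {E F : Set V} (hE : E ⊆ closedBall (0 : V) R)
    (hF : F ⊆ closedBall (0 : V) R) : symmDiff E F ⊆ closedBall (0 : V) R := by
  rw [Set.symmDiff_def]
  exact union_subset (diff_subset.trans hE) (diff_subset.trans hF)

lemma integrableOn_infDist_symmDiff {E F : Set V} (G : Set V)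
    (hE : E ⊆ closedBall (0 : V) R) (hF : F ⊆ closedBall (0 : V) R) :
    IntegrableOn (fun x : V => infDist x G) (symmDiff E F) := by
  have h1 : IntegrableOn (fun x : V => infDist x G) (closedBall (0 : V) R) :=
    (continuous_infDist_pt G).continuousOn.integrableOn_compact (isCompact_closedBall _ _)
  exact h1.mono_set (symmDiff_subset_closedBall hE hF)

lemma integral_symmDiff_ge {E F : Set V} (hEc : IsCompact E) (hFc : IsCompact F)
    (hE : E ⊆ closedBall (0 : V) R) (hF : F ⊆ closedBall (0 : V) R)
    {z : V} {ρ c : ℝ} (hc : 0 ≤ c) (hsub : ball z ρ ⊆ symmDiff E F)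
    (hlow : ∀ y ∈ ball z ρ, c ≤ infDist y (frontier E)) :
    c * (volume (ball (0 : V) ρ)).toReal ≤ ∫ x in symmDiff E F, infDist x (frontier E) := by
  have hint : IntegrableOn (fun x : V => infDist x (frontier E)) (symmDiff E F) :=
    integrableOn_infDist_symmDiff _ hE hF
  have h1 : c * (volume (ball z ρ)).toReal ≤ ∫ x in ball z ρ, infDist x (frontier E) :=
    setIntegral_ge_of_const_le_real measurableSet_ball measure_ball_lt_top.ne hlow
      (hint.mono_set hsub)
  rw [Measure.addHaar_ball_center volume z ρ] at h1
  refine h1.trans (setIntegral_mono_set hint ?_ (HasSubset.Subset.eventuallyLE hsub))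
  exact Eventually.of_forall (fun x => infDist_nonneg)

lemma key_lower (hn : 0 < n) (hr : 0 < r) (hrR : r < R) {E F : Set V}
    (hEc : IsCompact E) (hFc : IsCompact F) (hE : MemSrR n r R E) (hF : MemSrR n r R F)
    {ε : ℝ} (hε : 0 < ε) (hεr : ε ≤ r) (hH : ε ≤ hausdorffDist E F) :
    min ((ε / 4) * (volume (ball (0 : V) (ε / (8 * (R + r)) * r))).toReal)
        ((ε / (8 * (R + r)) * r / 2) *
          (volume (ball (0 : V) (ε / (8 * (R + r)) * r / 2))).toReal)
      ≤ ∫ x in symmDiff E F, infDist x (frontier E) := by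
  have hR : 0 < R := hr.trans hrR
  have hEne : E.Nonempty := ⟨0, hE.zero_mem hr⟩
  have hFne : F.Nonempty := ⟨0, hF.zero_mem hr⟩
  set t0 : ℝ := ε / (8 * (R + r)) with ht0_def
  have ht0 : 0 < t0 := by positivity
  have ht01 : t0 ≤ 1 := by
    rw [ht0_def, div_le_one (by positivity)]
    nlinarith
  have ht0rR : t0 * (r + R) = ε / 8 := by
    rw [ht0_def]; field_simp; ring
  have hdist : ∀ x : V, ‖x‖ ≤ R → ∀ y ∈ ball ((1 - t0) • x) (t0 * r), dist y x < ε / 4 := by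
    intro x hx y hy
    rw [mem_ball] at hy
    have h1 : dist ((1 - t0) • x) x = t0 * ‖x‖ := by
      rw [dist_eq_norm, show (1 - t0) • x - x = (-t0) • x by module, norm_smul,
        Real.norm_eq_abs, abs_neg, abs_of_pos ht0]
    calc dist y x ≤ dist y ((1 - t0) • x) + dist ((1 - t0) • x) x := dist_triangle _ _ _
      _ < t0 * r + t0 * ‖x‖ := by rw [h1]; linarith
      _ ≤ t0 * r + t0 * R := by nlinarith
      _ = ε / 8 := by rw [← ht0rR]; ring
      _ < ε / 4 := by linarith
  have hcases : (∃ x ∈ E, ε / 2 ≤ infDist x F) ∨ (∃ x ∈ F, ε / 2 ≤ infDist x E) := by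
    by_contra h
    push_neg at h
    have : hausdorffDist E F ≤ ε / 2 :=
      hausdorffDist_le_of_infDist (by linarith) (fun x hx => (h.1 x hx).le)
        (fun x hx => (h.2 x hx).le)
    linarith
  rcases hcases with ⟨x, hxE, hxF⟩ | ⟨x, hxF, hxE⟩
  · have hxR : ‖x‖ ≤ R := by
      have := hE.2.1 hxE; rwa [mem_closedBall_zero_iff] at this
    set z : V := (1 - t0) • x with hz_def
    have hBE : ball z (t0 * r) ⊆ E := hE.cone_ball_subset hr hxE ht0 ht01
    have hBnF : ∀ y ∈ ball z (t0 * r), y ∉ F := by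
      intro y hy
      have h2 : infDist x F ≤ infDist y F + dist x y := infDist_le_infDist_add_dist
      have h3 : dist x y < ε / 4 := by rw [dist_comm]; exact hdist x hxR y hy
      refine (hFc.isClosed.notMem_iff_infDist_pos hFne).mpr ?_
      linarith
    have hsub : ball z (t0 * r / 2) ⊆ symmDiff E F := by
      intro y hy
      have hy' : y ∈ ball z (t0 * r) := ball_subset_ball (by nlinarith) hy
      rw [Set.mem_symmDiff]
      exact Or.inl ⟨hBE hy', hBnF y hy'⟩
    have hEc_ne : (Eᶜ : Set V).Nonempty := by
      obtain ⟨p, hp⟩ := exists_not_mem_of_subset_closedBall hn hR hE.2.1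
      exact ⟨p, hp⟩
    have hlow : ∀ y ∈ ball z (t0 * r / 2), t0 * r / 2 ≤ infDist y (frontier E) := by
      intro y hy
      rw [mem_ball] at hy
      have hyc : t0 * r / 2 ≤ infDist y (Eᶜ : Set V) := by
        refine le_infDist' hEc_ne (fun q hq => ?_)
        by_contra hd
        push_neg at hd
        refine hq (hBE ?_)
        rw [mem_ball]
        calc dist q z ≤ dist q y + dist y z := dist_triangle _ _ _
          _ < t0 * r / 2 + t0 * r / 2 := add_lt_add (by rwa [dist_comm]) hy
          _ = t0 * r := by ring
      refine le_infDist' (hE.frontier_nonempty hn hr hR) (fun p hp => ?_)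
      have hp' : p ∈ closure (Eᶜ : Set V) := by
        rw [← frontier_compl] at hp
        exact frontier_subset_closure hp
      calc t0 * r / 2 ≤ infDist y (Eᶜ : Set V) := hyc
        _ = infDist y (closure (Eᶜ : Set V)) := infDist_closure.symm
        _ ≤ dist y p := infDist_le_dist_of_mem hp'
    refine le_trans (min_le_right _ _) ?_
    exact integral_symmDiff_ge hEc hFc hE.2.1 hF.2.1 (by positivity) hsub hlow
  · have hxR : ‖x‖ ≤ R := by
      have := hF.2.1 hxF; rwa [mem_closedBall_zero_iff] at this
    set z : V := (1 - t0) • x with hz_def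
    have hBF : ball z (t0 * r) ⊆ F := hF.cone_ball_subset hr hxF ht0 ht01
    have hlowE : ∀ y ∈ ball z (t0 * r), ε / 4 ≤ infDist y E := by
      intro y hy
      have h2 : infDist x E ≤ infDist y E + dist x y := infDist_le_infDist_add_dist
      have h3 : dist x y < ε / 4 := by rw [dist_comm]; exact hdist x hxR y hy
      linarith
    have hsub : ball z (t0 * r) ⊆ symmDiff E F := by
      intro y hy
      rw [Set.mem_symmDiff]
      refine Or.inr ⟨hBF hy, ?_⟩
      refine (hEc.isClosed.notMem_iff_infDist_pos hEne).mpr ?_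
      have := hlowE y hy; linarith
    have hlow : ∀ y ∈ ball z (t0 * r), ε / 4 ≤ infDist y (frontier E) := by
      intro y hy
      refine le_infDist' (hE.frontier_nonempty hn hr hR) (fun p hp => ?_)
      calc ε / 4 ≤ infDist y E := hlowE y hy
        _ ≤ dist y p := infDist_le_dist_of_mem (hEc.isClosed.frontier_subset hp)
    refine le_trans (min_le_left _ _) ?_
    exact integral_symmDiff_ge hEc hFc hE.2.1 hF.2.1 (by linarith) hsub hlow

lemma vol_smul_diff_le {E : Set V} (hEc : IsCompact E) (hE : MemSrR n r R E) (hr : 0 < r)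
    {s : ℝ} (hs : 1 ≤ s) :
    (volume (s • E \ E)).toReal ≤ (s ^ n - 1) * (volume (closedBall (0 : V) R)).toReal := by
  have hEfin : volume E ≠ ⊤ := hEc.measure_lt_top.ne
  have hsm : volume (s • E) = ENNReal.ofReal (s ^ n) * volume E := by
    rw [Measure.addHaar_smul, finrank_euclideanSpace_fin,
      abs_of_nonneg (pow_nonneg (by linarith) n)]
  have hsmfin : volume (s • E) ≠ ⊤ := by
    rw [hsm]; exact ENNReal.mul_ne_top ENNReal.ofReal_ne_top hEfin
  have hdiff : volume (s • E \ E) = volume (s • E) - volume E :=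
    measure_diff (hE.subset_smul hr hs) hEc.isClosed.measurableSet.nullMeasurableSet hEfin
  rw [hdiff, ENNReal.toReal_sub_of_le (measure_mono (hE.subset_smul hr hs)) hsmfin, hsm,
    ENNReal.toReal_mul, ENNReal.toReal_ofReal (pow_nonneg (by linarith) n)]
  have h1 : (volume E).toReal ≤ (volume (closedBall (0 : V) R)).toReal :=
    ENNReal.toReal_mono measure_closedBall_lt_top.ne (measure_mono hE.2.1)
  have h2 : (0:ℝ) ≤ (volume E).toReal := ENNReal.toReal_nonneg
  have h3 : 1 ≤ s ^ n := one_le_pow₀ hs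
  nlinarith

lemma vol_symmDiff_le {E F : Set V} (hEc : IsCompact E) (hFc : IsCompact F)
    (hE : MemSrR n r R E) (hF : MemSrR n r R F) (hr : 0 < r) {s : ℝ} (hs : 1 ≤ s)
    (hEF : E ⊆ s • F) (hFE : F ⊆ s • E) :
    (volume (symmDiff E F)).toReal
      ≤ 2 * ((s ^ n - 1) * (volume (closedBall (0 : V) R)).toReal) := by
  have h1 : symmDiff E F ⊆ (s • F \ F) ∪ (s • E \ E) := by
    rw [Set.symmDiff_def]
    exact union_subset_union (fun y hy => ⟨hEF hy.1, hy.2⟩) (fun y hy => ⟨hFE hy.1, hy.2⟩)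
  have hfinF : volume (s • F \ F) ≠ ⊤ := by
    refine ne_of_lt (lt_of_le_of_lt (measure_mono diff_subset) ?_)
    rw [Measure.addHaar_smul]
    exact ENNReal.mul_lt_top ENNReal.ofReal_lt_top hFc.measure_lt_top
  have hfinE : volume (s • E \ E) ≠ ⊤ := by
    refine ne_of_lt (lt_of_le_of_lt (measure_mono diff_subset) ?_)
    rw [Measure.addHaar_smul]
    exact ENNReal.mul_lt_top ENNReal.ofReal_lt_top hEc.measure_lt_top
  have h2 : volume (symmDiff E F) ≤ volume (s • F \ F) + volume (s • E \ E) :=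
    (measure_mono h1).trans (measure_union_le _ _)
  calc (volume (symmDiff E F)).toReal
      ≤ (volume (s • F \ F) + volume (s • E \ E)).toReal :=
        ENNReal.toReal_mono (ENNReal.add_ne_top.mpr ⟨hfinF, hfinE⟩) h2
    _ = (volume (s • F \ F)).toReal + (volume (s • E \ E)).toReal :=
        ENNReal.toReal_add hfinF hfinE
    _ ≤ (s ^ n - 1) * (volume (closedBall (0 : V) R)).toReal
          + (s ^ n - 1) * (volume (closedBall (0 : V) R)).toReal :=
        add_le_add (vol_smul_diff_le hFc hF hr hs) (vol_smul_diff_le hEc hE hr hs)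
    _ = 2 * ((s ^ n - 1) * (volume (closedBall (0 : V) R)).toReal) := by ring

lemma integral_le_two_R_mul {E F : Set V} (hn : 0 < n) (hr : 0 < r) (hR : 0 < R)
    (hEc : IsCompact E) (hFc : IsCompact F) (hE : MemSrR n r R E) (hF : MemSrR n r R F) :
    ∫ x in symmDiff E F, infDist x (frontier E) ≤ 2 * R * (volume (symmDiff E F)).toReal := by
  have hmeas : MeasurableSet (symmDiff E F) :=
    hEc.isClosed.measurableSet.symmDiff hFc.isClosed.measurableSet
  have hfin : volume (symmDiff E F) ≠ ⊤ :=
    ne_of_lt (lt_of_le_of_lt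
      (measure_mono (symmDiff_subset_closedBall hE.2.1 hF.2.1)) measure_closedBall_lt_top)
  obtain ⟨p, hp⟩ := hE.frontier_nonempty hn hr hR
  have hbound : ∀ x ∈ symmDiff E F, infDist x (frontier E) ≤ 2 * R := by
    intro x hx
    have hx' : ‖x‖ ≤ R := by
      have := symmDiff_subset_closedBall hE.2.1 hF.2.1 hx
      rwa [mem_closedBall_zero_iff] at this
    have hpR : ‖p‖ ≤ R := by
      have := hE.2.1 (hEc.isClosed.frontier_subset hp)
      rwa [mem_closedBall_zero_iff] at this
    calc infDist x (frontier E) ≤ dist x p := infDist_le_dist_of_mem hp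
      _ ≤ ‖x‖ + ‖p‖ := by rw [dist_eq_norm]; exact norm_sub_le _ _
      _ ≤ 2 * R := by linarith
  calc ∫ x in symmDiff E F, infDist x (frontier E)
      ≤ ∫ _x in symmDiff E F, 2 * R :=
        setIntegral_mono_on (integrableOn_infDist_symmDiff _ hE.2.1 hF.2.1)
          (integrableOn_const hfin) hmeas hbound
    _ = (volume (symmDiff E F)).toReal * (2 * R) := by
        rw [setIntegral_const, smul_eq_mul]; rfl
    _ = 2 * R * (volume (symmDiff E F)).toReal := by ring

end Aux

/-- For compact sets `F_k, F_∞ ∈ S_{r,R}`, convergence `d̃(F_k,F_∞) → 0` holds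
if and only if `F_k → F_∞` in the Hausdorff metric. -/
theorem dtil_tendsto_iff_hausdorff (n : ℕ) (r R : ℝ) (hr : 0 < r) (hrR : r < R)
    (F : ℕ → Set (EuclideanSpace ℝ (Fin n))) (Flim : Set (EuclideanSpace ℝ (Fin n)))
    (hcomp : ∀ k, IsCompact (F k)) (hcomplim : IsCompact Flim)
    (hmem : ∀ k, MemSrR n r R (F k)) (hmemlim : MemSrR n r R Flim) :
    Tendsto (fun k => dtil n (F k) Flim) atTop (nhds 0) ↔
      Tendsto (fun k => hausdorffDist (F k) Flim) atTop (nhds 0) := by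
  rcases Nat.eq_zero_or_pos n with hn | hn
  · subst hn
    have huniv : ∀ G : Set (EuclideanSpace ℝ (Fin 0)),
        ball (0 : EuclideanSpace ℝ (Fin 0)) r ⊆ G → G = univ := by
      intro G hG
      refine eq_univ_of_forall fun x => ?_
      have hx : x = 0 := Subsingleton.elim x 0
      exact hG (by rw [hx]; exact mem_ball_self hr)
    have h1 : ∀ k, F k = univ := fun k => huniv _ (hmem k).1
    have h2 : Flim = univ := huniv _ hmemlim.1
    constructor <;> intro _
    · have h3 : ∀ k, hausdorffDist (F k) Flim = 0 := fun k => by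
        rw [h1 k, h2, hausdorffDist_self_zero]
      simp only [h3]
      exact tendsto_const_nhds
    · have h3 : ∀ k, dtil 0 (F k) Flim = 0 := fun k => by
        simp [dtil, h1 k, h2, symmDiff_self]
      simp only [h3]
      exact tendsto_const_nhds
  have hR : 0 < R := hr.trans hrR
  constructor
  · intro htil
    have hmeas : ∀ k, MeasurableSet (symmDiff (F k) Flim) := fun k =>
      (hcomp k).isClosed.measurableSet.symmDiff hcomplim.isClosed.measurableSet
    have hInt : ∀ k, 0 ≤ ∫ x in symmDiff (F k) Flim, infDist x (frontier (F k)) := fun k =>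
      setIntegral_nonneg (hmeas k) fun x _ => infDist_nonneg
    have hI : Tendsto (fun k => ∫ x in symmDiff (F k) Flim, infDist x (frontier (F k)))
        atTop (nhds 0) := by
      have h2 : Tendsto (fun k => dtil n (F k) Flim ^ 2) atTop (nhds 0) := by
        simpa using htil.pow 2
      refine h2.congr fun k => ?_
      simp only [dtil]
      rw [Real.sq_sqrt (hInt k)]
    rw [Metric.tendsto_atTop]
    intro ε hε
    set ε' : ℝ := min ε r with hε'_def
    have hε' : 0 < ε' := lt_min hε hr
    have hε'r : ε' ≤ r := min_le_right _ _
    set m : ℝ := min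
        ((ε' / 4) *
          (volume (ball (0 : EuclideanSpace ℝ (Fin n)) (ε' / (8 * (R + r)) * r))).toReal)
        ((ε' / (8 * (R + r)) * r / 2) *
          (volume (ball (0 : EuclideanSpace ℝ (Fin n))
            (ε' / (8 * (R + r)) * r / 2))).toReal) with hm_def
    have hm : 0 < m := by
      refine lt_min (mul_pos (by positivity) ?_) (mul_pos (by positivity) ?_)
      · exact ENNReal.toReal_pos (measure_ball_pos _ _ (by positivity)).ne'
          measure_ball_lt_top.ne
      · exact ENNReal.toReal_pos (measure_ball_pos _ _ (by positivity)).ne'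
          measure_ball_lt_top.ne
    obtain ⟨N, hN⟩ := Metric.tendsto_atTop.mp hI m hm
    refine ⟨N, fun k hk => ?_⟩
    have hIk := hN k hk
    rw [Real.dist_eq, sub_zero, abs_of_nonneg (hInt k)] at hIk
    rw [Real.dist_eq, sub_zero, abs_of_nonneg hausdorffDist_nonneg]
    by_contra hcon
    push_neg at hcon
    have hH : ε' ≤ hausdorffDist (F k) Flim := le_trans (min_le_left _ _) hcon
    have hkey := key_lower hn hr hrR (hcomp k) hcomplim (hmem k) hmemlim hε' hε'r hH
    rw [← hm_def] at hkey
    linarith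
  · intro hHaus
    set εseq : ℕ → ℝ := fun k => hausdorffDist (F k) Flim with hεseq
    set sseq : ℕ → ℝ := fun k => 1 + (εseq k + ((k : ℝ) + 1)⁻¹) / r with hsseq
    have hεnn : ∀ k, 0 ≤ εseq k := fun k => hausdorffDist_nonneg
    have hsge : ∀ k, 1 ≤ sseq k := by
      intro k
      have h1 : 0 ≤ εseq k := hεnn k
      have h2 : (0:ℝ) < ((k : ℝ) + 1)⁻¹ := by positivity
      have h3 : 0 ≤ (εseq k + ((k : ℝ) + 1)⁻¹) / r := by positivity
      simp only [hsseq]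
      linarith
    have hEd : ∀ k, EMetric.hausdorffEdist (F k) Flim ≠ ⊤ := fun k =>
      hausdorffEdist_ne_top_of_nonempty_of_bounded ⟨0, (hmem k).zero_mem hr⟩
        ⟨0, hmemlim.zero_mem hr⟩ (hcomp k).isBounded hcomplim.isBounded
    have hslt : ∀ k, 1 + εseq k / r < sseq k := by
      intro k
      simp only [hsseq]
      have h2 : (0:ℝ) < ((k : ℝ) + 1)⁻¹ := by positivity
      have : εseq k / r < (εseq k + ((k : ℝ) + 1)⁻¹) / r := by gcongr; linarith
      linarith
    have hsub1 : ∀ k, F k ⊆ sseq k • Flim := by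
      intro k x hx
      exact hmemlim.mem_smul_of_infDist_le hr (hεnn k)
        (infDist_le_hausdorffDist_of_mem hx (hEd k)) (hslt k)
    have hsub2 : ∀ k, Flim ⊆ sseq k • F k := by
      intro k x hx
      refine (hmem k).mem_smul_of_infDist_le hr (hεnn k) ?_ (hslt k)
      have h4 : infDist x (F k) ≤ hausdorffDist Flim (F k) :=
        infDist_le_hausdorffDist_of_mem hx (by rw [EMetric.hausdorffEdist_comm]; exact hEd k)
      rwa [hausdorffDist_comm] at h4
    have hbound : ∀ k, dtil n (F k) Flim ≤ Real.sqrt (2 * R * (2 * ((sseq k ^ n - 1) *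
        (volume (closedBall (0 : EuclideanSpace ℝ (Fin n)) R)).toReal))) := by
      intro k
      simp only [dtil]
      apply Real.sqrt_le_sqrt
      calc ∫ x in symmDiff (F k) Flim, infDist x (frontier (F k))
          ≤ 2 * R * (volume (symmDiff (F k) Flim)).toReal :=
            integral_le_two_R_mul hn hr hR (hcomp k) hcomplim (hmem k) hmemlim
        _ ≤ 2 * R * (2 * ((sseq k ^ n - 1) *
              (volume (closedBall (0 : EuclideanSpace ℝ (Fin n)) R)).toReal)) := by
            have := vol_symmDiff_le (hcomp k) hcomplim (hmem k) hmemlim hr (hsge k)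
              (hsub1 k) (hsub2 k)
            nlinarith [this]
    have hs_tend : Tendsto sseq atTop (nhds 1) := by
      have h1 : Tendsto εseq atTop (nhds 0) := hHaus
      have h2 : Tendsto (fun k : ℕ => ((k : ℝ) + 1)⁻¹) atTop (nhds 0) := by
        simpa [one_div] using tendsto_one_div_add_atTop_nhds_zero_nat (𝕜 := ℝ)
      have h3 := ((h1.add h2).div_const r).const_add 1
      simpa using h3
    have hb_tend : Tendsto (fun k => Real.sqrt (2 * R * (2 * ((sseq k ^ n - 1) *
        (volume (closedBall (0 : EuclideanSpace ℝ (Fin n)) R)).toReal)))) atTop (nhds 0) := by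
      have h4 : Tendsto (fun k => sseq k ^ n) atTop (nhds 1) := by
        simpa using hs_tend.pow n
      have h5 := (((h4.sub_const 1).mul_const
        ((volume (closedBall (0 : EuclideanSpace ℝ (Fin n)) R)).toReal)).const_mul
          2).const_mul (2 * R)
      have h6 : Tendsto (fun k => 2 * R * (2 * ((sseq k ^ n - 1) *
          (volume (closedBall (0 : EuclideanSpace ℝ (Fin n)) R)).toReal))) atTop (nhds 0) := by
        simpa using h5
      have h7 := (Real.continuous_sqrt.tendsto 0).comp h6
      simpa [Function.comp_def] using h7
    exact squeeze_zero (fun k => Real.sqrt_nonneg _) hbound hb_tend
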